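/- arXiv:1103.2877 — 2 statements merged into one kernel-verified Lean document; each statement's English description precedes it below -/
import Mathlib

section
/- For every antichain κ in the interval [α ∨ β, α × β], the projections are exactly recovered: π_{sp(α)}(κ) = α and π_{sp(β)}(κ) = β. -/
open Finset

/-- Families of finite subsets of ℕ. -/
abbrev Fam := Finset (Finset ℕ)

/-- `α` is an antichain of subsets of `N`: all members are subsets of `N`
and no member is a (proper) subset of another. -/
def IsAC (N : Finset ℕ) (α : Fam) : Prop :=
  (∀ A ∈ α, A ⊆ N) ∧ ∀ A ∈ α, ∀ B ∈ α, A ⊆ B → A = B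

instance (N : Finset ℕ) : DecidablePred (IsAC N) := fun α => by
  unfold IsAC; infer_instance

/-- The partial order on antichains: every member of `α` is contained in some member of `β`. -/
def amle (α β : Fam) : Prop := ∀ A ∈ α, ∃ B ∈ β, A ⊆ B

instance (α β : Fam) : Decidable (amle α β) := by
  unfold amle; infer_instance

/-- `sup` of a family: its maximal elements under inclusion. -/
def maxels (S : Fam) : Fam := S.filter (fun A => ∀ B ∈ S, A ⊆ B → A = B)

/-- The span of an antichain: the union of its members. -/
def sp (α : Fam) : Finset ℕ := α.sup id

/-- Join: maximal elements of the union. -/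
def joinAC (α β : Fam) : Fam := maxels (α ∪ β)

/-- Meet: maximal elements of the pairwise intersections. -/
def meetAC (α β : Fam) : Fam := maxels ((α ×ˢ β).image fun p => p.1 ∩ p.2)

/-- Projection onto `M`: maximal elements of {A ∩ M : A ∈ α}. -/
def proj (M : Finset ℕ) (α : Fam) : Fam := maxels (α.image (· ∩ M))

/-- External product. -/
def xprod (α β : Fam) : Fam :=
  maxels ((α ×ˢ β).image fun p => (p.1 \ sp β) ∪ (p.2 \ sp α) ∪ (p.1 ∩ p.2))

/-- The finite set of all antichains of subsets of `N`. -/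
def AMTf (N : Finset ℕ) : Finset Fam := N.powerset.powerset.filter (IsAC N)

/-- The interval `[a, b]` inside `AMTf N`, as a `Finset`. -/
def intervalF (N : Finset ℕ) (a b : Fam) : Finset Fam :=
  (AMTf N).filter (fun κ => amle a κ ∧ amle κ b)

/-- The interval `[a, b]` of antichains of subsets of `N`, as a `Set`. -/
def intervalSet (N : Finset ℕ) (a b : Fam) : Set Fam :=
  {κ | IsAC N κ ∧ amle a κ ∧ amle κ b}

/-- n-ary join of a family indexed by the members of `σ`. -/
def bigJoin (σ : Fam) (κ : Finset ℕ → Fam) : Fam := maxels (σ.sup κ)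

/-- n-ary external product of a family indexed by the members of `σ`. -/
noncomputable def bigX (σ : Fam) (κ : Finset ℕ → Fam) : Fam :=
  (σ.toList.map κ).foldr xprod {(∅ : Finset ℕ)}

/-- Nonempty antichains of subsets of `S` with span exactly `S`. -/
def Upsf (S : Finset ℕ) : Finset Fam :=
  S.powerset.powerset.filter (fun κ => IsAC S κ ∧ κ ≠ ∅ ∧ sp κ = S)


lemma mem_sp_of_mem {α : Fam} {A : Finset ℕ} (h : A ∈ α) : A ⊆ sp α :=
  Finset.le_sup (f := id) h

lemma exists_le_maxels {S : Fam} {A : Finset ℕ} (h : A ∈ S) :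
    ∃ M ∈ maxels S, A ⊆ M := by
  have hne : (S.filter (A ⊆ ·)).Nonempty := ⟨A, by simp [h]⟩
  obtain ⟨M, hM, hmax⟩ := (S.filter (A ⊆ ·)).exists_max_image Finset.card hne
  rw [mem_filter] at hM
  refine ⟨M, ?_, hM.2⟩
  rw [maxels, mem_filter]
  refine ⟨hM.1, fun C hC hMC => ?_⟩
  have hAC : A ⊆ C := hM.2.trans hMC
  have := hmax C (by simp [hC, hAC])
  exact Finset.eq_of_subset_of_card_le hMC this

lemma maxels_eq_of {I α : Fam} (hac : ∀ A ∈ α, ∀ B ∈ α, A ⊆ B → A = B)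
    (hsub : ∀ X ∈ I, ∃ A ∈ α, X ⊆ A) (hmem : ∀ A ∈ α, A ∈ I) :
    maxels I = α := by
  ext X
  simp only [maxels, mem_filter]
  constructor
  · rintro ⟨hXI, hmax⟩
    obtain ⟨A, hA, hXA⟩ := hsub X hXI
    rwa [hmax A (hmem A hA) hXA]
  · intro hX
    refine ⟨hmem X hX, fun Y hY hXY => ?_⟩
    obtain ⟨A, hA, hYA⟩ := hsub Y hY
    have hXA := hac X hX A hA (hXY.trans hYA)
    subst hXA
    exact Finset.Subset.antisymm hXY hYA

lemma key_proj (α κ : Fam) (hac : ∀ A ∈ α, ∀ B ∈ α, A ⊆ B → A = B)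
    (h1 : amle α κ) (h2 : ∀ K ∈ κ, ∃ A ∈ α, K ∩ sp α ⊆ A) :
    proj (sp α) κ = α := by
  apply maxels_eq_of hac
  · intro X hX
    obtain ⟨K, hK, rfl⟩ := mem_image.mp hX
    exact h2 K hK
  · intro A hA
    obtain ⟨K, hK, hAK⟩ := h1 A hA
    obtain ⟨A', hA', hKA'⟩ := h2 K hK
    have hAKs : A ⊆ K ∩ sp α :=
      Finset.subset_inter hAK (mem_sp_of_mem hA)
    have : A = A' := hac A hA A' hA' (hAKs.trans hKA')
    subst this
    have : A = K ∩ sp α := Finset.Subset.antisymm hAKs hKA'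
    rw [this]
    exact mem_image_of_mem _ hK

/-- the projections of any element of `[α ∨ β, α × β]`
recover `α` and `β` exactly. -/
theorem interval_invariant (N : Finset ℕ) (α β κ : Fam)
    (hα : IsAC N α) (hβ : IsAC N β) (hκ : IsAC N κ)
    (h1 : amle (joinAC α β) κ) (h2 : amle κ (xprod α β)) :
    proj (sp α) κ = α ∧ proj (sp β) κ = β := by
  have hbound : ∀ K ∈ κ, ∃ A ∈ α, ∃ B ∈ β, K ∩ sp α ⊆ A ∧ K ∩ sp β ⊆ B := by
    intro K hK
    obtain ⟨X, hX, hKX⟩ := h2 K hK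
    have hX' := (mem_filter.mp hX).1
    obtain ⟨⟨A, B⟩, hAB, rfl⟩ := mem_image.mp hX'
    rw [Finset.mem_product] at hAB
    refine ⟨A, hAB.1, B, hAB.2, ?_, ?_⟩ <;>
    · intro x hx
      rw [Finset.mem_inter] at hx
      have := hKX hx.1
      simp only [Finset.mem_union, Finset.mem_sdiff, Finset.mem_inter] at this
      have hx2 := hx.2
      tauto
  have hαle : amle α κ := by
    intro A hA
    obtain ⟨M, hM, hAM⟩ := exists_le_maxels (Finset.mem_union_left β hA)
    obtain ⟨K, hK, hMK⟩ := h1 M hM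
    exact ⟨K, hK, hAM.trans hMK⟩
  have hβle : amle β κ := by
    intro B hB
    obtain ⟨M, hM, hBM⟩ := exists_le_maxels (Finset.mem_union_right α hB)
    obtain ⟨K, hK, hMK⟩ := h1 M hM
    exact ⟨K, hK, hBM.trans hMK⟩
  constructor
  · exact key_proj α κ hα.2 hαle (fun K hK => by
      obtain ⟨A, hA, _, _, h, _⟩ := hbound K hK; exact ⟨A, hA, h⟩)
  · exact key_proj β κ hβ.2 hβle (fun K hK => by
      obtain ⟨_, _, B, hB, _, h⟩ := hbound K hK; exact ⟨B, hB, h⟩)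
end

section
/- For n > 1 and any nonempty antichain α of subsets of {1,...,n-1}, the interval [α ∨ {{n}}, α × {{n}}] is in bijection with the interval [{∅}, α]: every κ in the former can be written uniquely as α ∨ (κ' × {{n}}) for some κ' ∈ [{∅}, α], hence |[α ∨ {{n}}, α × {{n}}]| = |[{∅}, α]|. -/
open Finset

lemma mem_maxels {S : Fam} {C : Finset ℕ} :
    C ∈ maxels S ↔ C ∈ S ∧ ∀ B ∈ S, C ⊆ B → C = B := by
  simp [maxels]

lemma maxels_of_antichain {S : Fam} (h : ∀ A ∈ S, ∀ B ∈ S, A ⊆ B → A = B) :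
    maxels S = S := by
  ext C; simp only [mem_maxels]
  exact ⟨fun ⟨h1, _⟩ => h1, fun hC => ⟨hC, fun B hB => h C hC B hB⟩⟩

lemma sp_singleton (A : Finset ℕ) : sp {A} = A := by simp [sp]

lemma mem_sp {α : Fam} {x : ℕ} : x ∈ sp α ↔ ∃ A ∈ α, x ∈ A := by
  simp [sp, Finset.mem_sup]

lemma insert_subset_insert_iff' {n : ℕ} {A B : Finset ℕ} (hA : n ∉ A) :
    insert n A ⊆ insert n B ↔ A ⊆ B := by
  constructor
  · intro h x hx
    have := h (Finset.mem_insert_of_mem hx)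
    rcases Finset.mem_insert.1 this with rfl | hB
    · exact absurd hx hA
    · exact hB
  · intro h; exact Finset.insert_subset_insert _ h

lemma xprod_singleton {n : ℕ} {α : Fam} (hno : ∀ A ∈ α, n ∉ A)
    (hch : ∀ A ∈ α, ∀ B ∈ α, A ⊆ B → A = B) :
    xprod α {({n} : Finset ℕ)} = α.image (insert n) := by
  have himg : ((α ×ˢ ({({n} : Finset ℕ)} : Fam)).image
      fun p => (p.1 \ sp {({n} : Finset ℕ)}) ∪ (p.2 \ sp α) ∪ (p.1 ∩ p.2))
      = α.image (insert n) := by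
    ext C
    simp only [Finset.mem_image, Finset.mem_product, Finset.mem_singleton, sp_singleton]
    constructor
    · rintro ⟨⟨A, B⟩, ⟨hA, rfl⟩, rfl⟩
      refine ⟨A, hA, ?_⟩
      have h1 : A \ {n} = A := Finset.sdiff_eq_self_of_disjoint (by
        simp [Finset.disjoint_singleton_right, hno A hA])
      have h2 : {n} \ sp α = {n} := Finset.sdiff_eq_self_of_disjoint (by
        simp [Finset.disjoint_singleton_left, mem_sp]; intro B hB; exact fun hn => hno B hB hn)
      have h3 : A ∩ {n} = ∅ := by
        ext x; simp only [Finset.mem_inter, Finset.mem_singleton, Finset.notMem_empty, iff_false]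
        rintro ⟨hx, rfl⟩; exact hno A hA hx
      rw [h1, h2, h3]
      ext x; simp [Finset.mem_insert, or_comm]
    · rintro ⟨A, hA, rfl⟩
      refine ⟨(A, {n}), ⟨hA, rfl⟩, ?_⟩
      have h1 : A \ {n} = A := Finset.sdiff_eq_self_of_disjoint (by
        simp [Finset.disjoint_singleton_right, hno A hA])
      have h2 : ({n} : Finset ℕ) \ sp α = {n} := Finset.sdiff_eq_self_of_disjoint (by
        simp [Finset.disjoint_singleton_left, mem_sp]; intro B hB; exact fun hn => hno B hB hn)
      have h3 : A ∩ {n} = ∅ := by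
        ext x; simp only [Finset.mem_inter, Finset.mem_singleton, Finset.notMem_empty, iff_false]
        rintro ⟨hx, rfl⟩; exact hno A hA hx
      rw [h1, h2, h3]
      ext x; simp [Finset.mem_insert, or_comm]
  rw [xprod, himg]
  apply maxels_of_antichain
  simp only [Finset.mem_image, forall_exists_index, and_imp]
  rintro _ A hA rfl _ B hB rfl hsub
  rw [(insert_subset_insert_iff' (hno A hA)).1 hsub |> hch A hA B hB]
lemma mysubset_insert_iff {n : ℕ} {C B : Finset ℕ} (hC : n ∉ C) :
    C ⊆ insert n B ↔ C ⊆ B := by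
  constructor
  · intro h x hx
    rcases Finset.mem_insert.1 (h hx) with rfl | hB
    · exact absurd hx hC
    · exact hB
  · intro h; exact h.trans (Finset.subset_insert _ _)

lemma mem_joinG {n : ℕ} {α κ' : Fam} {C : Finset ℕ}
    (hno : ∀ A ∈ α, n ∉ A) (hch : ∀ A ∈ α, ∀ B ∈ α, A ⊆ B → A = B)
    (hno' : ∀ B ∈ κ', n ∉ B) (hch' : ∀ A ∈ κ', ∀ B ∈ κ', A ⊆ B → A = B) :
    C ∈ joinAC α (κ'.image (insert n)) ↔
      (C ∈ α ∧ ∀ B ∈ κ', ¬ C ⊆ B) ∨ (∃ B ∈ κ', C = insert n B) := by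
  rw [joinAC, mem_maxels]
  constructor
  · rintro ⟨hCm, hmax⟩
    rcases Finset.mem_union.1 hCm with hCα | hCi
    · left
      refine ⟨hCα, fun B hB hsub => ?_⟩
      have h1 : C ⊆ insert n B := hsub.trans (Finset.subset_insert _ _)
      have h2 := hmax (insert n B)
        (Finset.mem_union_right _ (Finset.mem_image_of_mem _ hB)) h1
      have : n ∈ C := h2 ▸ Finset.mem_insert_self n B
      exact hno C hCα this
    · right
      rcases Finset.mem_image.1 hCi with ⟨B, hB, rfl⟩
      exact ⟨B, hB, rfl⟩
  · rintro (⟨hCα, hnot⟩ | ⟨B, hB, rfl⟩)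
    · refine ⟨Finset.mem_union_left _ hCα, ?_⟩
      intro D hD hsub
      rcases Finset.mem_union.1 hD with hDα | hDi
      · exact hch C hCα D hDα hsub
      · rcases Finset.mem_image.1 hDi with ⟨B, hB, rfl⟩
        exact absurd ((mysubset_insert_iff (hno C hCα)).1 hsub) (hnot B hB)
    · refine ⟨Finset.mem_union_right _ (Finset.mem_image_of_mem _ hB), ?_⟩
      intro D hD hsub
      rcases Finset.mem_union.1 hD with hDα | hDi
      · exact absurd (hsub (Finset.mem_insert_self n B)) (hno D hDα)
      · rcases Finset.mem_image.1 hDi with ⟨B', hB', rfl⟩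
        rw [hch' B hB B' hB' ((insert_subset_insert_iff' (hno' B hB)).1 hsub)]
lemma maxels_subset {S : Fam} : maxels S ⊆ S := Finset.filter_subset _ _

/-- bijection `[α ∨ {{n}}, α × {{n}}] ≃ [{∅}, α]`. -/
theorem interval_singleton_bijection (n : ℕ) (h : 1 < n) (α : Fam)
    (hα : IsAC (Finset.Icc 1 (n - 1)) α) (hne : α ≠ ∅) :
    (∀ κ ∈ intervalF (Finset.Icc 1 n)
        (joinAC α {({n} : Finset ℕ)}) (xprod α {({n} : Finset ℕ)}),
      ∃! κ' : Fam,
        κ' ∈ intervalF (Finset.Icc 1 (n - 1)) ({(∅ : Finset ℕ)} : Fam) α ∧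
        κ = joinAC α (xprod κ' {({n} : Finset ℕ)})) ∧
    (intervalF (Finset.Icc 1 n)
        (joinAC α {({n} : Finset ℕ)}) (xprod α {({n} : Finset ℕ)})).card =
      (intervalF (Finset.Icc 1 (n - 1)) ({(∅ : Finset ℕ)} : Fam) α).card := by
  set N' := Finset.Icc 1 (n - 1) with hN'def
  set N := Finset.Icc 1 n with hNdef
  have hnN' : n ∉ N' := by simp only [hN'def, Finset.mem_Icc]; omega
  have hNins : N = insert n N' := by
    ext x; simp only [hNdef, hN'def, Finset.mem_Icc, Finset.mem_insert]; omega
  have hno : ∀ A ∈ α, n ∉ A := fun A hA hn => hnN' (hα.1 A hA hn)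
  have hch := hα.2
  have hxα : xprod α {({n} : Finset ℕ)} = α.image (insert n) := xprod_singleton hno hch
  -- membership characterization of the right interval
  have hmemR : ∀ κ' : Fam, κ' ∈ intervalF N' ({(∅ : Finset ℕ)} : Fam) α ↔
      IsAC N' κ' ∧ κ'.Nonempty ∧ amle κ' α := by
    intro κ'
    simp only [intervalF, AMTf, Finset.mem_filter, Finset.mem_powerset]
    constructor
    · rintro ⟨⟨_, hAC⟩, hlo, hhi⟩
      refine ⟨hAC, ?_, hhi⟩
      obtain ⟨B, hB, -⟩ := hlo ∅ (Finset.mem_singleton_self _)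
      exact ⟨B, hB⟩
    · rintro ⟨hAC, ⟨B, hB⟩, hhi⟩
      refine ⟨⟨fun A hA => Finset.mem_powerset.2 (hAC.1 A hA), hAC⟩, ?_, hhi⟩
      intro A hA
      rw [Finset.mem_singleton] at hA
      exact ⟨B, hB, hA ▸ Finset.empty_subset B⟩
  -- membership characterization of the left interval
  have hmemL : ∀ κ : Fam, κ ∈ intervalF N (joinAC α {({n} : Finset ℕ)})
        (xprod α {({n} : Finset ℕ)}) ↔
      IsAC N κ ∧ amle (joinAC α {({n} : Finset ℕ)}) κ ∧ amle κ (α.image (insert n)) := by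
    intro κ
    simp only [intervalF, AMTf, Finset.mem_filter, Finset.mem_powerset, hxα]
    constructor
    · rintro ⟨⟨_, hAC⟩, hlo, hhi⟩; exact ⟨hAC, hlo, hhi⟩
    · rintro ⟨hAC, hlo, hhi⟩
      exact ⟨⟨fun A hA => Finset.mem_powerset.2 (hAC.1 A hA), hAC⟩, hlo, hhi⟩
  have hsingmem : ({n} : Finset ℕ) ∈ joinAC α {({n} : Finset ℕ)} := by
    rw [joinAC, mem_maxels]
    refine ⟨Finset.mem_union_right _ (Finset.mem_singleton_self _), ?_⟩
    intro D hD hsub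
    rcases Finset.mem_union.1 hD with hDα | hDs
    · exact absurd (hsub (Finset.mem_singleton_self n)) (hno D hDα)
    · exact (Finset.mem_singleton.1 hDs).symm
  -- nonempty maximal elements of α are in the join with {{n}}
  have hαmax : ∀ A ∈ α, A ≠ ∅ → A ∈ joinAC α {({n} : Finset ℕ)} := by
    intro A hA hAne
    rw [joinAC, mem_maxels]
    refine ⟨Finset.mem_union_left _ hA, ?_⟩
    intro D hD hsub
    rcases Finset.mem_union.1 hD with hDα | hDs
    · exact hch A hA D hDα hsub
    · rw [Finset.mem_singleton.1 hDs] at hsub ⊢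
      obtain ⟨x, hx⟩ := Finset.nonempty_iff_ne_empty.2 hAne
      have : x = n := Finset.mem_singleton.1 (hsub hx)
      exact absurd (this ▸ hx) (hno A hA)
  -- the forward map
  set F : Fam → Fam := fun κ => (κ.filter (n ∈ ·)).image (fun C => C.erase n) with hFdef
  -- basic facts about members of right interval
  have hRfacts : ∀ κ' : Fam, IsAC N' κ' →
      (∀ B ∈ κ', n ∉ B) ∧ xprod κ' {({n} : Finset ℕ)} = κ'.image (insert n) := by
    intro κ' hAC
    have hno' : ∀ B ∈ κ', n ∉ B := fun B hB hn => hnN' (hAC.1 B hB hn)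
    exact ⟨hno', xprod_singleton hno' hAC.2⟩
  -- KEY A : the map κ' ↦ α ∨ (κ' × {{n}}) lands in the left interval
  have keyA : ∀ κ' ∈ intervalF N' ({(∅ : Finset ℕ)} : Fam) α,
      joinAC α (xprod κ' {({n} : Finset ℕ)}) ∈ intervalF N (joinAC α {({n} : Finset ℕ)})
        (xprod α {({n} : Finset ℕ)}) := by
    intro κ' hκ'
    rw [hmemR] at hκ'
    obtain ⟨hAC', hne', hle'⟩ := hκ'
    obtain ⟨hno', hx'⟩ := hRfacts κ' hAC'
    rw [hx', hmemL]
    refine ⟨⟨?_, ?_⟩, ?_, ?_⟩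
    · -- members are subsets of N
      intro C hC
      rw [mem_joinG hno hch hno' hAC'.2] at hC
      rcases hC with ⟨hCα, -⟩ | ⟨B, hB, rfl⟩
      · exact (hα.1 C hCα).trans (hNins ▸ Finset.subset_insert _ _)
      · rw [hNins]
        exact Finset.insert_subset_insert _ (hAC'.1 B hB)
    · -- antichain
      intro A hA B hB hsub
      rw [joinAC, mem_maxels] at hA hB
      exact hA.2 B hB.1 hsub
    · -- lower bound
      intro C hC
      have hC' := maxels_subset hC
      rcases Finset.mem_union.1 hC' with hCα | hCs
      · by_cases hex : ∃ B ∈ κ', C ⊆ B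
        · obtain ⟨B, hB, hsub⟩ := hex
          exact ⟨insert n B, (mem_joinG hno hch hno' hAC'.2).2 (Or.inr ⟨B, hB, rfl⟩),
            hsub.trans (Finset.subset_insert _ _)⟩
        · push_neg at hex
          exact ⟨C, (mem_joinG hno hch hno' hAC'.2).2 (Or.inl ⟨hCα, hex⟩), le_refl _⟩
      · rw [Finset.mem_singleton.1 hCs]
        obtain ⟨B, hB⟩ := hne'
        exact ⟨insert n B, (mem_joinG hno hch hno' hAC'.2).2 (Or.inr ⟨B, hB, rfl⟩),
          Finset.singleton_subset_iff.2 (Finset.mem_insert_self _ _)⟩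
    · -- upper bound
      intro C hC
      rw [mem_joinG hno hch hno' hAC'.2] at hC
      rcases hC with ⟨hCα, -⟩ | ⟨B, hB, rfl⟩
      · exact ⟨insert n C, Finset.mem_image_of_mem _ hCα, Finset.subset_insert _ _⟩
      · obtain ⟨A, hA, hsub⟩ := hle' B hB
        exact ⟨insert n A, Finset.mem_image_of_mem _ hA, Finset.insert_subset_insert _ hsub⟩
  -- KEY B : existence
  have keyB : ∀ κ ∈ intervalF N (joinAC α {({n} : Finset ℕ)}) (xprod α {({n} : Finset ℕ)}),
      F κ ∈ intervalF N' ({(∅ : Finset ℕ)} : Fam) α ∧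
        κ = joinAC α (xprod (F κ) {({n} : Finset ℕ)}) := by
    intro κ hκ
    rw [hmemL] at hκ
    obtain ⟨hκAC, hlo, hhi⟩ := hκ
    -- properties of F κ
    have hmemF : ∀ B : Finset ℕ, B ∈ F κ ↔ ∃ C ∈ κ, n ∈ C ∧ B = C.erase n := by
      intro B
      simp only [hFdef, Finset.mem_image, Finset.mem_filter]
      constructor
      · rintro ⟨C, ⟨hC, hnC⟩, rfl⟩; exact ⟨C, hC, hnC, rfl⟩
      · rintro ⟨C, hC, hnC, rfl⟩; exact ⟨C, ⟨hC, hnC⟩, rfl⟩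
    have hsubN' : ∀ B ∈ F κ, B ⊆ N' := by
      intro B hB
      obtain ⟨C, hC, hnC, rfl⟩ := (hmemF B).1 hB
      intro x hx
      obtain ⟨hxn, hxC⟩ := Finset.mem_erase.1 hx
      have := (hNins ▸ hκAC.1 C hC) hxC
      rcases Finset.mem_insert.1 this with rfl | hxN'
      · exact absurd rfl hxn
      · exact hxN'
    have hchF : ∀ A ∈ F κ, ∀ B ∈ F κ, A ⊆ B → A = B := by
      intro A hA B hB hsub
      obtain ⟨C, hC, hnC, rfl⟩ := (hmemF A).1 hA
      obtain ⟨D, hD, hnD, rfl⟩ := (hmemF B).1 hB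
      have hCD : C ⊆ D := by
        intro x hx
        by_cases hxn : x = n
        · exact hxn ▸ hnD
        · exact Finset.erase_subset _ _ (hsub (Finset.mem_erase.2 ⟨hxn, hx⟩))
      rw [hκAC.2 C hC D hD hCD]
    have hACF : IsAC N' (F κ) := ⟨hsubN', hchF⟩
    have hnoF : ∀ B ∈ F κ, n ∉ B := fun B hB => hnN' ∘ (hsubN' B hB ·)
    -- κ has a member containing n
    obtain ⟨Cn, hCn, hCnsub⟩ := hlo ({n} : Finset ℕ) hsingmem
    have hnCn : n ∈ Cn := hCnsub (Finset.mem_singleton_self n)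
    have hneF : (F κ).Nonempty := ⟨Cn.erase n, (hmemF _).2 ⟨Cn, hCn, hnCn, rfl⟩⟩
    -- ∅ is not a member of κ
    have hκnoempty : (∅ : Finset ℕ) ∉ κ := by
      intro h0
      have := hκAC.2 ∅ h0 Cn hCn (Finset.empty_subset _)
      rw [← this] at hnCn
      exact absurd hnCn (Finset.notMem_empty n)
    have hleF : amle (F κ) α := by
      intro B hB
      obtain ⟨C, hC, hnC, rfl⟩ := (hmemF B).1 hB
      obtain ⟨D, hD, hsub⟩ := hhi C hC
      obtain ⟨A, hA, rfl⟩ := Finset.mem_image.1 hD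
      refine ⟨A, hA, ?_⟩
      intro x hx
      obtain ⟨hxn, hxC⟩ := Finset.mem_erase.1 hx
      rcases Finset.mem_insert.1 (hsub hxC) with rfl | hxA
      · exact absurd rfl hxn
      · exact hxA
    refine ⟨(hmemR _).2 ⟨hACF, hneF, hleF⟩, ?_⟩
    -- the reconstruction identity
    rw [(hRfacts _ hACF).2]
    ext C
    rw [mem_joinG hno hch hnoF hchF]
    constructor
    · intro hC
      by_cases hnC : n ∈ C
      · exact Or.inr ⟨C.erase n, (hmemF _).2 ⟨C, hC, hnC, rfl⟩, (Finset.insert_erase hnC).symm⟩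
      · left
        have hCne : C ≠ ∅ := fun h0 => hκnoempty (h0 ▸ hC)
        obtain ⟨D, hD, hsubD⟩ := hhi C hC
        obtain ⟨A, hA, rfl⟩ := Finset.mem_image.1 hD
        have hCA : C ⊆ A := (mysubset_insert_iff hnC).1 hsubD
        have hAne : A ≠ ∅ := fun h0 => hCne (Finset.subset_empty.1 (h0 ▸ hCA))
        obtain ⟨E, hE, hAE⟩ := hlo A (hαmax A hA hAne)
        have hCE : C = E := hκAC.2 C hC E hE (hCA.trans hAE)
        have hCeqA : C = A := Finset.Subset.antisymm hCA (hCE ▸ hAE)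
        constructor
        · exact hCeqA ▸ hA
        · intro B hB hsubB
          obtain ⟨D', hD', hnD', rfl⟩ := (hmemF B).1 hB
          have : C ⊆ D' := hsubB.trans (Finset.erase_subset _ _)
          have := hκAC.2 C hC D' hD' this
          exact hnC (this ▸ hnD')
    · rintro (⟨hCα, hnot⟩ | ⟨B, hB, rfl⟩)
      · have hCne : C ≠ ∅ := by
          rintro rfl
          obtain ⟨B, hB⟩ := hneF
          exact hnot B hB (Finset.empty_subset _)
        obtain ⟨E, hE, hCE⟩ := hlo C (hαmax C hCα hCne)
        by_cases hnE : n ∈ E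
        · exfalso
          refine hnot (E.erase n) ((hmemF _).2 ⟨E, hE, hnE, rfl⟩) ?_
          intro x hx
          exact Finset.mem_erase.2 ⟨fun h => hno C hCα (h ▸ hx), hCE hx⟩
        · obtain ⟨D, hD, hsubD⟩ := hhi E hE
          obtain ⟨A, hA, rfl⟩ := Finset.mem_image.1 hD
          have hEA : E ⊆ A := (mysubset_insert_iff hnE).1 hsubD
          have : C = A := hch C hCα A hA (hCE.trans hEA)
          have hEC : E ⊆ C := this ▸ hEA
          have : C = E := Finset.Subset.antisymm hCE hEC
          exact this ▸ hE
      · obtain ⟨D, hD, hnD, rfl⟩ := (hmemF B).1 hB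
        rw [Finset.insert_erase hnD]
        exact hD
  -- KEY C : uniqueness
  have keyC : ∀ (κ : Fam), ∀ κ'' ∈ intervalF N' ({(∅ : Finset ℕ)} : Fam) α,
      κ = joinAC α (xprod κ'' {({n} : Finset ℕ)}) → κ'' = F κ := by
    intro κ κ'' hκ'' heq
    rw [hmemR] at hκ''
    obtain ⟨hAC'', hne'', hle''⟩ := hκ''
    obtain ⟨hno'', hx''⟩ := hRfacts κ'' hAC''
    rw [hx''] at heq
    have hfilt : κ.filter (n ∈ ·) = κ''.image (insert n) := by
      ext D
      simp only [Finset.mem_filter]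
      constructor
      · rintro ⟨hD, hnD⟩
        rw [heq, mem_joinG hno hch hno'' hAC''.2] at hD
        rcases hD with ⟨hDα, -⟩ | ⟨B, hB, rfl⟩
        · exact absurd hnD (hno D hDα)
        · exact Finset.mem_image_of_mem _ hB
      · intro hD
        obtain ⟨B, hB, rfl⟩ := Finset.mem_image.1 hD
        refine ⟨?_, Finset.mem_insert_self _ _⟩
        rw [heq, mem_joinG hno hch hno'' hAC''.2]
        exact Or.inr ⟨B, hB, rfl⟩
    rw [hFdef]
    simp only [hfilt, Finset.image_image]
    symm
    rw [Finset.image_congr (g := id), Finset.image_id]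
    intro B hB
    simp only [Function.comp_apply, id_eq]
    exact Finset.erase_insert (hno'' B hB)
  -- assemble
  constructor
  · intro κ hκ
    obtain ⟨hF1, hF2⟩ := keyB κ hκ
    exact ⟨F κ, ⟨hF1, hF2⟩, fun κ'' ⟨h1, h2⟩ => keyC κ κ'' h1 h2⟩
  · symm
    apply Finset.card_bij (fun κ' _ => joinAC α (xprod κ' {({n} : Finset ℕ)})) keyA
    · intro a₁ ha₁ a₂ ha₂ heq
      rw [keyC _ a₁ ha₁ rfl, keyC _ a₂ ha₂ rfl, heq]
    · intro κ hκ
      obtain ⟨hF1, hF2⟩ := keyB κ hκ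
      exact ⟨F κ, hF1, hF2.symm⟩
end
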